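/- Let F be a field, n ≥ 1, and let A, B be n×n matrices over F. Define a multiplication on the vector space F^{2+n} by u·v = (u''ᵀAv'', u''ᵀBv'', 0, …, 0), where u'' ∈ Fⁿ denotes the vector of the last n coordinates of u. Then this multiplication is F-bilinear and associative, every product of three elements is zero (so R³ = 0 for the resulting algebra R), the span R² of all products u·v is contained in the span of the first two coordinate vectors, and dim R² = 2 if and only if A and B are linearly independent over F. -/

import Mathlib

open Matrix

/-- The last `n` coordinates of a vector in `F^(2+n)`. -/
def tailCoords {F : Type*} {n : ℕ} (u : Fin (2 + n) → F) : Fin n → F :=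
  fun j => u (Fin.natAdd 2 j)

/-- The multiplication `u·v = (u''ᵀ A v'', u''ᵀ B v'', 0, …, 0)` on `F^(2+n)`, where
`u''` is the vector of the last `n` coordinates of `u`. -/
def amul {F : Type*} [Field F] {n : ℕ} (A B : Matrix (Fin n) (Fin n) F)
    (u v : Fin (2 + n) → F) : Fin (2 + n) → F :=
  Fin.append ![tailCoords u ⬝ᵥ A *ᵥ tailCoords v, tailCoords u ⬝ᵥ B *ᵥ tailCoords v]
    (0 : Fin n → F)

section Aux

variable {F : Type*} [Field F] {n : ℕ}

private lemma append_repr (x y : F) :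
    Fin.append ![x, y] (0 : Fin n → F) =
      x • (Pi.single (⟨0, by omega⟩ : Fin (2 + n)) (1 : F) : Fin (2+n) → F)
      + y • (Pi.single (⟨1, by omega⟩ : Fin (2 + n)) (1 : F) : Fin (2+n) → F) := by
  funext i
  cases i using Fin.addCases with
  | left j =>
    rw [Fin.append_left]
    fin_cases j <;> simp [Pi.single_apply, Fin.ext_iff]
  | right j =>
    have h0 : (Fin.natAdd 2 j : Fin (2+n)) ≠ ⟨0, by omega⟩ := by
      simp [Fin.ext_iff]
    have h1 : (Fin.natAdd 2 j : Fin (2+n)) ≠ ⟨1, by omega⟩ := by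
      simp [Fin.ext_iff]; omega
    simp [Fin.append_right, Pi.single_apply, h0, h1]
    intro h
    exact absurd (congrArg Fin.val h) (by simp [Fin.ext_iff] at h0 ⊢)

private lemma amul_repr (A B : Matrix (Fin n) (Fin n) F) (u v : Fin (2+n) → F) :
    amul A B u v =
      (tailCoords u ⬝ᵥ A *ᵥ tailCoords v) •
        (Pi.single (⟨0, by omega⟩ : Fin (2 + n)) (1 : F) : Fin (2+n) → F)
      + (tailCoords u ⬝ᵥ B *ᵥ tailCoords v) •
        (Pi.single (⟨1, by omega⟩ : Fin (2 + n)) (1 : F) : Fin (2+n) → F) :=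
  append_repr _ _

private lemma tail_amul (A B : Matrix (Fin n) (Fin n) F) (u v : Fin (2+n) → F) :
    tailCoords (amul A B u v) = 0 := by
  funext j; simp [tailCoords, amul, Fin.append_right]

private lemma amul_of_tail_left (A B : Matrix (Fin n) (Fin n) F) {u : Fin (2+n) → F}
    (h : tailCoords u = 0) (v : Fin (2+n) → F) : amul A B u v = 0 := by
  rw [amul_repr, h]; simp

private lemma amul_of_tail_right (A B : Matrix (Fin n) (Fin n) F) {v : Fin (2+n) → F}
    (h : tailCoords v = 0) (u : Fin (2+n) → F) : amul A B u v = 0 := by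
  rw [amul_repr, h]; simp

/-- The linear embedding `F² → F^(2+n)` onto the first two coordinates. -/
private def Ltwo (F : Type*) [Field F] (n : ℕ) : (F × F) →ₗ[F] (Fin (2+n) → F) where
  toFun p := p.1 • (Pi.single (⟨0, by omega⟩ : Fin (2 + n)) (1 : F) : Fin (2+n) → F)
      + p.2 • (Pi.single (⟨1, by omega⟩ : Fin (2 + n)) (1 : F) : Fin (2+n) → F)
  map_add' p q := by simp; module
  map_smul' c p := by simp; module

private lemma Ltwo_apply0 (p : F × F) : Ltwo F n p ⟨0, by omega⟩ = p.1 := by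
  simp [Ltwo, Pi.single_apply, Fin.ext_iff]

private lemma Ltwo_apply1 (p : F × F) : Ltwo F n p ⟨1, by omega⟩ = p.2 := by
  simp [Ltwo, Pi.single_apply, Fin.ext_iff]

private lemma Ltwo_injective : Function.Injective (Ltwo F n) := by
  intro p q h
  have h0 := congrFun h (⟨0, by omega⟩ : Fin (2+n))
  have h1 := congrFun h (⟨1, by omega⟩ : Fin (2+n))
  rw [Ltwo_apply0, Ltwo_apply0] at h0
  rw [Ltwo_apply1, Ltwo_apply1] at h1
  exact Prod.ext h0 h1

private lemma amul_eq_L (A B : Matrix (Fin n) (Fin n) F) (u v : Fin (2+n) → F) :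
    amul A B u v
      = Ltwo F n (tailCoords u ⬝ᵥ A *ᵥ tailCoords v, tailCoords u ⬝ᵥ B *ᵥ tailCoords v) :=
  amul_repr A B u v

private lemma pair_mem_span (A B : Matrix (Fin n) (Fin n) F) (u v : Fin n → F) :
    ((u ⬝ᵥ A *ᵥ v, u ⬝ᵥ B *ᵥ v) : F × F) ∈
      Submodule.span F (Set.range fun p : Fin n × Fin n => ((A p.1 p.2, B p.1 p.2) : F × F)) := by
  have h1 : ∀ (M : Matrix (Fin n) (Fin n) F), u ⬝ᵥ M *ᵥ v = ∑ i, ∑ j, u i * v j * M i j := by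
    intro M
    simp only [dotProduct, mulVec, Finset.mul_sum]
    exact Finset.sum_congr rfl fun i _ => Finset.sum_congr rfl fun j _ => by ring
  have key : ((u ⬝ᵥ A *ᵥ v, u ⬝ᵥ B *ᵥ v) : F × F)
      = ∑ i, ∑ j, (u i * v j) • ((A i j, B i j) : F × F) := by
    ext
    · simp [Prod.fst_sum, h1, smul_eq_mul]
    · simp [Prod.snd_sum, h1, smul_eq_mul]
  rw [key]
  exact Submodule.sum_mem _ fun i _ => Submodule.sum_mem _ fun j _ =>
    Submodule.smul_mem _ _ (Submodule.subset_span ⟨(i, j), rfl⟩)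

end Aux

theorem amul_algebra_properties
    {F : Type*} [Field F] {n : ℕ} (hn : 1 ≤ n) (A B : Matrix (Fin n) (Fin n) F) :
    (∀ (a b : F) (u u' v : Fin (2 + n) → F),
      amul A B (a • u + b • u') v = a • amul A B u v + b • amul A B u' v) ∧
    (∀ (a b : F) (u v v' : Fin (2 + n) → F),
      amul A B u (a • v + b • v') = a • amul A B u v + b • amul A B u v') ∧
    (∀ u v w : Fin (2 + n) → F, amul A B (amul A B u v) w = amul A B u (amul A B v w)) ∧
    (∀ u v w : Fin (2 + n) → F, amul A B (amul A B u v) w = 0) ∧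
    (∀ u v w : Fin (2 + n) → F, amul A B u (amul A B v w) = 0) ∧
    (Submodule.span F {x : Fin (2 + n) → F | ∃ u v, amul A B u v = x} ≤
      Submodule.span F {Pi.single (⟨0, by omega⟩ : Fin (2 + n)) (1 : F),
        Pi.single (⟨1, by omega⟩ : Fin (2 + n)) (1 : F)}) ∧
    (Module.finrank F
        (Submodule.span F {x : Fin (2 + n) → F | ∃ u v, amul A B u v = x}) = 2 ↔
      ∀ a b : F, a • A + b • B = 0 → a = 0 ∧ b = 0) := by
  have hz3l : ∀ u v w : Fin (2 + n) → F, amul A B (amul A B u v) w = 0 := fun u v w =>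
    amul_of_tail_left A B (tail_amul A B u v) w
  have hz3r : ∀ u v w : Fin (2 + n) → F, amul A B u (amul A B v w) = 0 := fun u v w =>
    amul_of_tail_right A B (tail_amul A B v w) u
  refine ⟨?_, ?_, fun u v w => (hz3l u v w).trans (hz3r u v w).symm, hz3l, hz3r, ?_, ?_⟩
  · intro a b u u' v
    have ht : tailCoords (a • u + b • u') = a • tailCoords u + b • tailCoords u' := rfl
    simp only [amul_repr, ht, add_dotProduct, smul_dotProduct, smul_eq_mul]
    module
  · intro a b u v v'
    have ht : tailCoords (a • v + b • v') = a • tailCoords v + b • tailCoords v' := rfl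
    simp only [amul_repr, ht, mulVec_add, mulVec_smul, dotProduct_add, dotProduct_smul,
      smul_eq_mul]
    module
  · refine Submodule.span_le.mpr ?_
    rintro x ⟨u, v, rfl⟩
    rw [amul_repr]
    exact Submodule.add_mem _
      (Submodule.smul_mem _ _ (Submodule.subset_span (Set.mem_insert _ _)))
      (Submodule.smul_mem _ _ (Submodule.subset_span (Set.mem_insert_of_mem _ rfl)))
  · -- the dimension statement
    set T : Set (F × F) := Set.range fun p : Fin n × Fin n => ((A p.1 p.2, B p.1 p.2) : F × F)
      with hT
    have hST : Submodule.span F {x : Fin (2 + n) → F | ∃ u v, amul A B u v = x}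
        = Submodule.map (Ltwo F n) (Submodule.span F T) := by
      apply le_antisymm
      · refine Submodule.span_le.mpr ?_
        rintro x ⟨u, v, rfl⟩
        exact ⟨_, pair_mem_span A B (tailCoords u) (tailCoords v), (amul_eq_L A B u v).symm⟩
      · rw [Submodule.map_span]
        refine Submodule.span_le.mpr ?_
        rintro x ⟨_, ⟨⟨i, j⟩, rfl⟩, rfl⟩
        refine Submodule.subset_span ?_
        refine ⟨Fin.append (0 : Fin 2 → F) (Pi.single i 1),
          Fin.append (0 : Fin 2 → F) (Pi.single j 1), ?_⟩
        have hti : tailCoords (Fin.append (0 : Fin 2 → F) (Pi.single i (1:F))) =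
            Pi.single i 1 := by
          funext k; simp [tailCoords, Fin.append_right]
        have htj : tailCoords (Fin.append (0 : Fin 2 → F) (Pi.single j (1:F))) =
            Pi.single j 1 := by
          funext k; simp [tailCoords, Fin.append_right]
        rw [amul_eq_L, hti, htj]
        congr 1
        simp [single_dotProduct, mulVec_single]
    rw [hST]
    have hfr : Module.finrank F (Submodule.map (Ltwo F n) (Submodule.span F T))
        = Module.finrank F (Submodule.span F T) :=
      ((Submodule.equivMapOfInjective _ Ltwo_injective _).finrank_eq).symm
    rw [hfr]
    have hrank2 : Module.finrank F (F × F) = 2 := by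
      simp [Module.finrank_prod]
    constructor
    · intro h a b hab
      have htop : Submodule.span F T = ⊤ :=
        Submodule.eq_top_of_finrank_eq (by rw [h, hrank2])
      set f : (F × F) →ₗ[F] F :=
        a • LinearMap.fst F F F + b • LinearMap.snd F F F with hfdef
      have hker : Submodule.span F T ≤ LinearMap.ker f := by
        refine Submodule.span_le.mpr ?_
        rintro _ ⟨⟨i, j⟩, rfl⟩
        have h2 := congrFun (congrFun hab i) j
        simp only [Matrix.add_apply, Matrix.smul_apply, Matrix.zero_apply, smul_eq_mul] at h2
        simp [hfdef, h2]
      rw [htop] at hker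
      have ha := hker (Submodule.mem_top (x := ((1 : F), (0 : F))))
      have hb := hker (Submodule.mem_top (x := ((0 : F), (1 : F))))
      simp [hfdef] at ha hb
      exact ⟨ha, hb⟩
    · intro h
      suffices htop : Submodule.span F T = ⊤ by
        rw [htop, finrank_top, hrank2]
      by_contra hne
      obtain ⟨f, hf, hmap⟩ :=
        Submodule.exists_dual_map_eq_bot_of_lt_top (lt_top_iff_ne_top.mpr hne) inferInstance
      set a : F := f (1, 0) with hadef
      set b : F := f (0, 1) with hbdef
      have hft : ∀ p : F × F, f p = p.1 * a + p.2 * b := by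
        intro p
        have hp : p = p.1 • ((1 : F), (0 : F)) + p.2 • ((0 : F), (1 : F)) := by
          ext <;> simp
        conv_lhs => rw [hp]
        simp only [map_add, LinearMap.map_smul, smul_eq_mul]
        rfl
      have hab : a • A + b • B = 0 := by
        ext i j
        have hmem : ((A i j, B i j) : F × F) ∈ Submodule.span F T :=
          Submodule.subset_span ⟨(i, j), rfl⟩
        have hz : f (A i j, B i j) = 0 := by
          have : f (A i j, B i j) ∈ Submodule.map f (Submodule.span F T) :=
            ⟨_, hmem, rfl⟩
          rw [hmap] at this
          simpa using this
        rw [hft] at hz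
        simp only [Matrix.add_apply, Matrix.smul_apply, Matrix.zero_apply, smul_eq_mul]
        linear_combination hz
      obtain ⟨ha, hb⟩ := h a b hab
      exact hf (LinearMap.ext fun p => by rw [hft]; simp [ha, hb])
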